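/- Let A, B, X be Hermitian positive semi-definite matrices in C^{n×n}. Then (A+X):B − A:B = [ (A+B)^† B ]^* · [ (A+B):X ] · [ (A+B)^† B ]. -/

import Mathlib

open scoped Matrix Matrix.Norms.L2Operator ComplexOrder

/-- `MPInv A B` means `B` is the Moore-Penrose inverse of `A`. -/
def MPInv {n : ℕ} (A B : Matrix (Fin n) (Fin n) ℂ) : Prop :=
  A * B * A = A ∧ B * A * B = B ∧ (A * B).IsHermitian ∧ (B * A).IsHermitian

private lemma psd_right_eq_zero {n : ℕ} {P Q : Matrix (Fin n) (Fin n) ℂ}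
    (hP : P.PosSemidef) (hQ : Q.PosSemidef) (h : P + Q = 0) : Q = 0 := by
  have hq : ∀ x, Q *ᵥ x = 0 := by
    intro x
    rw [← hQ.dotProduct_mulVec_zero_iff]
    have h0 : star x ⬝ᵥ P *ᵥ x + star x ⬝ᵥ Q *ᵥ x = 0 := by
      rw [← dotProduct_add, ← Matrix.add_mulVec, h, Matrix.zero_mulVec, dotProduct_zero]
    have h1 := hP.dotProduct_mulVec_nonneg x
    have h2 := hQ.dotProduct_mulVec_nonneg x
    refine le_antisymm ?_ h2
    rw [eq_neg_of_add_eq_zero_right h0]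
    exact neg_nonpos.mpr h1
  ext i j
  have := congrFun (hq (Pi.single j 1)) i
  simpa [Matrix.mulVec_single] using this

private lemma mul_psd_eq_zero {n : ℕ} {P M : Matrix (Fin n) (Fin n) ℂ}
    (hP : P.PosSemidef) (h : M * P * Mᴴ = 0) : M * P = 0 := by
  obtain ⟨C, hC⟩ : ∃ C : Matrix (Fin n) (Fin n) ℂ, P = Cᴴ * C := by
    open scoped MatrixOrder in
    exact ⟨CFC.sqrt P, by
      have h1 : (CFC.sqrt P)ᴴ = CFC.sqrt P := (CFC.sqrt_nonneg P).isSelfAdjoint.star_eq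
      rw [h1, CFC.sqrt_mul_sqrt_self P hP.nonneg]⟩
  have h1 : (C * Mᴴ)ᴴ * (C * Mᴴ) = 0 := by
    rw [hC] at h
    calc (C * Mᴴ)ᴴ * (C * Mᴴ) = M * (Cᴴ * C) * Mᴴ := by
          simp only [Matrix.conjTranspose_mul, Matrix.conjTranspose_conjTranspose,
            Matrix.mul_assoc]
      _ = 0 := h
  have h2 : C * Mᴴ = 0 := Matrix.conjTranspose_mul_self_eq_zero.mp h1
  calc M * P = (C * Mᴴ)ᴴ * C := by
        rw [hC]; simp only [Matrix.conjTranspose_mul, Matrix.conjTranspose_conjTranspose,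
          Matrix.mul_assoc]
    _ = 0 := by rw [h2, Matrix.conjTranspose_zero, Matrix.zero_mul]

private lemma proj_facts {n : ℕ} {P Q D : Matrix (Fin n) (Fin n) ℂ}
    (hP : P.PosSemidef) (hQ : Q.PosSemidef) (hD : MPInv (P + Q) D) :
    (P + Q) * D * Q = Q ∧ Q * ((P + Q) * D) = Q ∧ Q * D * (P + Q) = Q := by
  obtain ⟨h1, h2, h3, h4⟩ := hD
  have hQh : Qᴴ = Q := hQ.1
  -- E-side : E = 1 - (P+Q) * D
  have hEfacts : ((P + Q)) * D * Q = Q ∧ Q * ((P + Q) * D) = Q := by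
    set E : Matrix (Fin n) (Fin n) ℂ := 1 - (P + Q) * D with hE
    have hEh : Eᴴ = E := by
      rw [hE, Matrix.conjTranspose_sub, Matrix.conjTranspose_one, h3]
    have hES : E * (P + Q) = 0 := by
      rw [hE, Matrix.sub_mul, Matrix.one_mul, h1, sub_self]
    have hsum : E * P * Eᴴ + E * Q * Eᴴ = 0 := by
      calc E * P * Eᴴ + E * Q * Eᴴ = E * (P + Q) * Eᴴ := by
            rw [Matrix.mul_add, Matrix.add_mul]
        _ = 0 := by rw [hES, Matrix.zero_mul]
    have hEQ : E * Q = 0 := mul_psd_eq_zero hQ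
      (psd_right_eq_zero (hP.mul_mul_conjTranspose_same E) (hQ.mul_mul_conjTranspose_same E) hsum)
    have hQE : Q * E = 0 := by
      have := congrArg Matrix.conjTranspose hEQ
      rwa [Matrix.conjTranspose_mul, hQh, hEh, Matrix.conjTranspose_zero] at this
    constructor
    · have h' : Q - (P + Q) * D * Q = 0 := by
        rw [hE, Matrix.sub_mul, Matrix.one_mul] at hEQ
        exact hEQ
      rw [sub_eq_zero] at h'; exact h'.symm
    · have : Q - Q * ((P + Q) * D) = 0 := by
        rw [hE, Matrix.mul_sub, Matrix.mul_one] at hQE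
        exact hQE
      rw [sub_eq_zero] at this; exact this.symm
  -- F-side : F = 1 - D * (P+Q)
  have hFfact : Q * D * (P + Q) = Q := by
    set F : Matrix (Fin n) (Fin n) ℂ := 1 - D * (P + Q) with hF
    have hFh : Fᴴ = F := by
      rw [hF, Matrix.conjTranspose_sub, Matrix.conjTranspose_one, h4]
    have hSF : (P + Q) * F = 0 := by
      rw [hF, Matrix.mul_sub, Matrix.mul_one, ← Matrix.mul_assoc, h1, sub_self]
    have hFS : F * (P + Q) = 0 := by
      have hSh : (P + Q)ᴴ = P + Q := by
        rw [Matrix.conjTranspose_add, hP.1, hQh]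
      have := congrArg Matrix.conjTranspose hSF
      rwa [Matrix.conjTranspose_mul, hSh, hFh, Matrix.conjTranspose_zero] at this
    have hsum : F * P * Fᴴ + F * Q * Fᴴ = 0 := by
      calc F * P * Fᴴ + F * Q * Fᴴ = F * (P + Q) * Fᴴ := by
            rw [Matrix.mul_add, Matrix.add_mul]
        _ = 0 := by rw [hFS, Matrix.zero_mul]
    have hFQ : F * Q = 0 := mul_psd_eq_zero hQ
      (psd_right_eq_zero (hP.mul_mul_conjTranspose_same F) (hQ.mul_mul_conjTranspose_same F) hsum)
    have hQF : Q * F = 0 := by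
      have := congrArg Matrix.conjTranspose hFQ
      rwa [Matrix.conjTranspose_mul, hQh, hFh, Matrix.conjTranspose_zero] at this
    have : Q - Q * D * (P + Q) = 0 := by
      rw [hF, Matrix.mul_sub, Matrix.mul_one, ← Matrix.mul_assoc] at hQF
      exact hQF
    rw [sub_eq_zero] at this; exact this.symm
  exact ⟨hEfacts.1, hEfacts.2, hFfact⟩

/-- Factorization of the one-sided perturbation (A+X):B - A:B. -/
theorem one_sided_perturbation_factorization {n : ℕ}
    (A B X Sd ABd : Matrix (Fin n) (Fin n) ℂ)
    (hA : A.PosSemidef) (hB : B.PosSemidef) (hX : X.PosSemidef)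
    (hSd : MPInv (A + X + B) Sd) (hABd : MPInv (A + B) ABd) :
    (A + X) * Sd * B - A * ABd * B
      = (ABd * B)ᴴ * ((A + B) * Sd * X) * (ABd * B) := by
  have hBh : Bᴴ = B := hB.1
  obtain ⟨f1, f2, f2'⟩ := proj_facts (hA.add hX) hB hSd
  obtain ⟨f3, f4, _⟩ := proj_facts hA hB hABd
  -- f1 : (A+X+B) * Sd * B = B ;  f2' : B * Sd * (A+X+B) = B
  -- f3 : (A+B) * ABd * B = B ;   f4 : B * ((A+B) * ABd) = B
  have hTh : (A + B)ᴴ = A + B := by rw [Matrix.conjTranspose_add, hA.1, hBh]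
  have hc : ABdᴴ * (A + B) = (A + B) * ABd := by
    rw [← hABd.2.2.1, Matrix.conjTranspose_mul, hTh]
  -- LHS = B*ABd*B - B*Sd*B
  have hL : (A + X) * Sd * B - A * ABd * B = B * ABd * B - B * Sd * B := by
    have e1 : (A + X) * Sd * B = B - B * Sd * B := by
      have h : (A + X) * Sd * B + B * Sd * B = B := by
        rw [← Matrix.add_mul, ← Matrix.add_mul]; exact f1
      exact eq_sub_of_add_eq h
    have e2 : A * ABd * B = B - B * ABd * B := by
      have h : A * ABd * B + B * ABd * B = B := by
        rw [← Matrix.add_mul, ← Matrix.add_mul]; exact f3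
      exact eq_sub_of_add_eq h
    rw [e1, e2]; abel
  -- RHS = B*ABd*B - B*Sd*B
  have hR : (ABd * B)ᴴ * ((A + B) * Sd * X) * (ABd * B) = B * ABd * B - B * Sd * B := by
    have hstep1 : (ABd * B)ᴴ * ((A + B) * Sd * X) * (ABd * B)
        = (B * (ABdᴴ * (A + B))) * Sd * X * ABd * B := by
      rw [Matrix.conjTranspose_mul, hBh]
      simp only [Matrix.mul_assoc]
    rw [hstep1, hc, f4]
    have hx : B * Sd * X = B - B * Sd * (A + B) := by
      have h : B * Sd * X + B * Sd * (A + B) = B := by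
        rw [← Matrix.mul_add]
        have : X + (A + B) = A + X + B := by abel
        rw [this]; exact f2'
      exact eq_sub_of_add_eq h
    rw [hx, Matrix.sub_mul, Matrix.sub_mul]
    have h5 : B * Sd * (A + B) * ABd * B = B * Sd * B := by
      calc B * Sd * (A + B) * ABd * B = B * Sd * ((A + B) * ABd * B) := by
            simp only [Matrix.mul_assoc]
        _ = B * Sd * B := by rw [f3]
    rw [h5]
  rw [hL, hR]
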